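/- If W has a unique fixed point in ℝ₊², then for every initial point (x₀, y₀) ∈ ℝ₊², Wⁿ(x₀, y₀) converges to this fixed point. -/

import Mathlib

noncomputable def Wmap (θ L : ℝ) (p : ℝ × ℝ) : ℝ × ℝ :=
  (L * ((1 + p.1) / (1 + θ + p.1 + p.2)) ^ 2,
   L * ((1 + p.2) / (1 + θ + p.1 + p.2)) ^ 2)

noncomputable def fval (θ L x y : ℝ) : ℝ := L * ((1 + x) / (1 + θ + x + y)) ^ 2

lemma Wmap_def (θ L : ℝ) (q : ℝ × ℝ) :
    Wmap θ L q = (fval θ L q.1 q.2, fval θ L q.2 q.1) := by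
  simp only [Wmap, fval, Prod.mk.injEq]
  exact ⟨trivial, by ring⟩

lemma fval_pos (θ L : ℝ) (hθ : 0 < θ) (hL : 0 < L) {x y : ℝ} (hx : 0 ≤ x) (hy : 0 ≤ y) :
    0 < fval θ L x y := by
  have hd : (0:ℝ) < 1 + θ + x + y := by linarith
  have hr : 0 < (1 + x) / (1 + θ + x + y) := div_pos (by linarith) hd
  exact mul_pos hL (pow_pos hr 2)

lemma fval_le (θ L : ℝ) (hθ : 0 < θ) (hL : 0 < L) {x y : ℝ} (hx : 0 ≤ x) (hy : 0 ≤ y) :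
    fval θ L x y ≤ L := by
  have hd : (0:ℝ) < 1 + θ + x + y := by linarith
  have hr : (1 + x) / (1 + θ + x + y) ≤ 1 := by
    rw [div_le_one hd]; linarith
  have hr0 : 0 ≤ (1 + x) / (1 + θ + x + y) := div_nonneg (by linarith) hd.le
  calc fval θ L x y ≤ L * 1 := mul_le_mul_of_nonneg_left (pow_le_one₀ hr0 hr) hL.le
    _ = L := mul_one L

lemma fval_mono (θ L : ℝ) (hθ : 0 < θ) (hL : 0 < L) {x y x' y' : ℝ}
    (hx : 0 ≤ x) (hy' : 0 ≤ y') (hxx : x ≤ x') (hyy : y' ≤ y) :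
    fval θ L x y ≤ fval θ L x' y' := by
  have hd : (0:ℝ) < 1 + θ + x + y := by linarith
  have hd' : (0:ℝ) < 1 + θ + x' + y' := by linarith
  have hr : (1 + x) / (1 + θ + x + y) ≤ (1 + x') / (1 + θ + x' + y') := by
    rw [div_le_div_iff₀ hd hd']; nlinarith
  have hr0 : 0 ≤ (1 + x) / (1 + θ + x + y) := div_nonneg (by linarith) hd.le
  exact mul_le_mul_of_nonneg_left (pow_le_pow_left₀ hr0 hr 2) hL.le

lemma Wmap_contAt (θ L : ℝ) (q : ℝ × ℝ) (hd : (1:ℝ) + θ + q.1 + q.2 ≠ 0) :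
    ContinuousAt (Wmap θ L) q := by
  have hden : ContinuousAt (fun r : ℝ × ℝ => 1 + θ + r.1 + r.2) q := by fun_prop
  apply ContinuousAt.prodMk
  · exact continuousAt_const.mul ((ContinuousAt.div (by fun_prop) hden hd).pow 2)
  · exact continuousAt_const.mul ((ContinuousAt.div (by fun_prop) hden hd).pow 2)

/-- A sequence of iterates converging to a nonnegative point has a fixed-point limit. -/
lemma limit_is_fixed (θ L : ℝ) (hθ : 0 < θ) (u : ℕ → ℝ × ℝ)
    (hsucc : ∀ n, u (n + 1) = Wmap θ L (u n)) (q : ℝ × ℝ)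
    (hq1 : 0 ≤ q.1) (hq2 : 0 ≤ q.2)
    (hlim : Filter.Tendsto u Filter.atTop (nhds q)) : Wmap θ L q = q := by
  have hd : (1:ℝ) + θ + q.1 + q.2 ≠ 0 := by positivity
  have h1 : Filter.Tendsto (fun n => Wmap θ L (u n)) Filter.atTop (nhds (Wmap θ L q)) :=
    (Wmap_contAt θ L q hd).tendsto.comp hlim
  have h2 : Filter.Tendsto (fun n => u (n + 1)) Filter.atTop (nhds q) :=
    hlim.comp (Filter.tendsto_add_atTop_nat 1)
  have h3 : Filter.Tendsto (fun n => u (n + 1)) Filter.atTop (nhds (Wmap θ L q)) := by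
    simpa only [hsucc] using h1
  exact tendsto_nhds_unique h3 h2

theorem unique_fixed_point_global_convergence (θ L : ℝ) (hθ : 0 < θ) (hL : 0 < L)
    (p : ℝ × ℝ) (hp1 : 0 < p.1) (hp2 : 0 < p.2) (hpfix : Wmap θ L p = p)
    (huniq : ∀ q : ℝ × ℝ, 0 < q.1 → 0 < q.2 → Wmap θ L q = q → q = p) :
    ∀ x₀ y₀ : ℝ, 0 < x₀ → 0 < y₀ →
      Filter.Tendsto (fun n => (Wmap θ L)^[n] (x₀, y₀)) Filter.atTop (nhds p) := by
  intro x₀ y₀ hx₀ hy₀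
  set W := Wmap θ L with hW
  set B : ℝ := max L (max x₀ y₀) with hB
  have hLB : L ≤ B := le_max_left _ _
  have hxB : x₀ ≤ B := le_trans (le_max_left _ _) (le_max_right _ _)
  have hyB : y₀ ≤ B := le_trans (le_max_right _ _) (le_max_right _ _)
  have hB0 : 0 ≤ B := le_trans hL.le hLB
  set Inv : ℝ × ℝ → Prop := fun q => 0 ≤ q.1 ∧ q.1 ≤ B ∧ 0 ≤ q.2 ∧ q.2 ≤ B with hInv
  set Kle : ℝ × ℝ → ℝ × ℝ → Prop := fun a b => a.1 ≤ b.1 ∧ b.2 ≤ a.2 with hKle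
  have invStep : ∀ q, Inv q → Inv (W q) := by
    rintro q ⟨h1, h2, h3, h4⟩
    rw [hW, Wmap_def]
    exact ⟨(fval_pos θ L hθ hL h1 h3).le, le_trans (fval_le θ L hθ hL h1 h3) hLB,
      (fval_pos θ L hθ hL h3 h1).le, le_trans (fval_le θ L hθ hL h3 h1) hLB⟩
  have kMono : ∀ a b, Inv a → Inv b → Kle a b → Kle (W a) (W b) := by
    rintro a b ⟨ha1, _, ha3, _⟩ ⟨hb1, _, hb3, _⟩ ⟨hk1, hk2⟩
    rw [hW, Wmap_def, Wmap_def]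
    exact ⟨fval_mono θ L hθ hL ha1 hb3 hk1 hk2, fval_mono θ L hθ hL hb3 ha1 hk2 hk1⟩
  set u : ℕ → ℝ × ℝ := fun n => W^[n] (0, B) with hu
  set v : ℕ → ℝ × ℝ := fun n => W^[n] (B, 0) with hv
  set w : ℕ → ℝ × ℝ := fun n => W^[n] (x₀, y₀) with hw
  have hu_succ : ∀ n, u (n + 1) = W (u n) := fun n => Function.iterate_succ_apply' W n _
  have hv_succ : ∀ n, v (n + 1) = W (v n) := fun n => Function.iterate_succ_apply' W n _
  have hw_succ : ∀ n, w (n + 1) = W (w n) := fun n => Function.iterate_succ_apply' W n _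
  have hu0 : u 0 = ((0:ℝ), B) := rfl
  have hv0 : v 0 = (B, (0:ℝ)) := rfl
  have hw0 : w 0 = (x₀, y₀) := rfl
  have main : ∀ n, Inv (u n) ∧ Inv (w n) ∧ Inv (v n) ∧ Kle (u n) (w n) ∧ Kle (w n) (v n)
      ∧ Kle (u n) (u (n + 1)) ∧ Kle (v (n + 1)) (v n) := by
    intro n
    induction n with
    | zero =>
      have hiu : Inv (u 0) := by rw [hu0]; exact ⟨le_refl 0, hB0, hB0, le_refl B⟩
      have hiw : Inv (w 0) := by rw [hw0]; exact ⟨hx₀.le, hxB, hy₀.le, hyB⟩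
      have hiv : Inv (v 0) := by rw [hv0]; exact ⟨hB0, le_refl B, le_refl 0, hB0⟩
      refine ⟨hiu, hiw, hiv, ?_, ?_, ?_, ?_⟩
      · rw [hu0, hw0]; exact ⟨hx₀.le, hyB⟩
      · rw [hw0, hv0]; exact ⟨hxB, hy₀.le⟩
      · rw [hu_succ 0, hu0, hW, Wmap_def]
        exact ⟨(fval_pos θ L hθ hL (le_refl 0) hB0).le,
          le_trans (fval_le θ L hθ hL hB0 (le_refl 0)) hLB⟩
      · rw [hv_succ 0, hv0, hW, Wmap_def]
        exact ⟨le_trans (fval_le θ L hθ hL hB0 (le_refl 0)) hLB,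
          (fval_pos θ L hθ hL (le_refl 0) hB0).le⟩
    | succ n ih =>
      obtain ⟨hiu, hiw, hiv, k1, k2, k3, k4⟩ := ih
      have hiu' : Inv (u (n+1)) := by rw [hu_succ]; exact invStep _ hiu
      have hiw' : Inv (w (n+1)) := by rw [hw_succ]; exact invStep _ hiw
      have hiv' : Inv (v (n+1)) := by rw [hv_succ]; exact invStep _ hiv
      refine ⟨hiu', hiw', hiv', ?_, ?_, ?_, ?_⟩
      · rw [hu_succ, hw_succ]; exact kMono _ _ hiu hiw k1
      · rw [hw_succ, hv_succ]; exact kMono _ _ hiw hiv k2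
      · have h := kMono _ _ hiu hiu' k3
        rw [← hu_succ n] at h
        rw [← hu_succ (n+1)] at h
        exact h
      · have h := kMono _ _ hiv' hiv k4
        rw [← hv_succ (n+1)] at h
        rw [← hv_succ n] at h
        exact h
  -- extract limits for u
  have hu1mono : Monotone (fun n => (u n).1) :=
    monotone_nat_of_le_succ fun n => (main n).2.2.2.2.2.1.1
  have hu2anti : Antitone (fun n => (u n).2) :=
    antitone_nat_of_succ_le fun n => (main n).2.2.2.2.2.1.2
  have hv1anti : Antitone (fun n => (v n).1) :=
    antitone_nat_of_succ_le fun n => (main n).2.2.2.2.2.2.1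
  have hv2mono : Monotone (fun n => (v n).2) :=
    monotone_nat_of_le_succ fun n => (main n).2.2.2.2.2.2.2
  have hbddu1 : BddAbove (Set.range fun n => (u n).1) :=
    ⟨B, by rintro x ⟨n, rfl⟩; exact (main n).1.2.1⟩
  have hbddu2 : BddBelow (Set.range fun n => (u n).2) :=
    ⟨0, by rintro x ⟨n, rfl⟩; exact (main n).1.2.2.1⟩
  have hbddv1 : BddBelow (Set.range fun n => (v n).1) :=
    ⟨0, by rintro x ⟨n, rfl⟩; exact (main n).2.2.1.1⟩
  have hbddv2 : BddAbove (Set.range fun n => (v n).2) :=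
    ⟨B, by rintro x ⟨n, rfl⟩; exact (main n).2.2.1.2.2.2⟩
  -- limits
  have hUlim1 := tendsto_atTop_ciSup hu1mono hbddu1
  have hUlim2 := tendsto_atTop_ciInf hu2anti hbddu2
  have hVlim1 := tendsto_atTop_ciInf hv1anti hbddv1
  have hVlim2 := tendsto_atTop_ciSup hv2mono hbddv2
  set qu : ℝ × ℝ := (⨆ n, (u n).1, ⨅ n, (u n).2) with hqu
  set qv : ℝ × ℝ := (⨅ n, (v n).1, ⨆ n, (v n).2) with hqv
  have hUlim : Filter.Tendsto u Filter.atTop (nhds qu) := by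
    rw [hqu, nhds_prod_eq]
    exact hUlim1.prodMk hUlim2
  have hVlim : Filter.Tendsto v Filter.atTop (nhds qv) := by
    rw [hqv, nhds_prod_eq]
    exact hVlim1.prodMk hVlim2
  -- nonnegativity of limits
  have hqu1 : 0 ≤ qu.1 := le_trans (main 0).1.1 (le_ciSup hbddu1 0)
  have hqu2 : 0 ≤ qu.2 := le_ciInf fun n => (main n).1.2.2.1
  have hqv1 : 0 ≤ qv.1 := le_ciInf fun n => (main n).2.2.1.1
  have hqv2 : 0 ≤ qv.2 := le_trans (main 0).2.2.1.2.2.1 (le_ciSup hbddv2 0)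
  -- limits are fixed points
  have hufix : Wmap θ L qu = qu := limit_is_fixed θ L hθ u hu_succ qu hqu1 hqu2 hUlim
  have hvfix : Wmap θ L qv = qv := limit_is_fixed θ L hθ v hv_succ qv hqv1 hqv2 hVlim
  -- limits are positive
  have hqu1pos : 0 < qu.1 := by
    have := congrArg Prod.fst hufix
    rw [Wmap_def] at this
    rw [← this]
    exact fval_pos θ L hθ hL hqu1 hqu2
  have hqu2pos : 0 < qu.2 := by
    have := congrArg Prod.snd hufix
    rw [Wmap_def] at this
    rw [← this]
    exact fval_pos θ L hθ hL hqu2 hqu1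
  have hqv1pos : 0 < qv.1 := by
    have := congrArg Prod.fst hvfix
    rw [Wmap_def] at this
    rw [← this]
    exact fval_pos θ L hθ hL hqv1 hqv2
  have hqv2pos : 0 < qv.2 := by
    have := congrArg Prod.snd hvfix
    rw [Wmap_def] at this
    rw [← this]
    exact fval_pos θ L hθ hL hqv2 hqv1
  have hqup : qu = p := huniq qu hqu1pos hqu2pos hufix
  have hqvp : qv = p := huniq qv hqv1pos hqv2pos hvfix
  rw [hqup] at hUlim
  rw [hqvp] at hVlim
  -- squeeze
  have hW1 : Filter.Tendsto (fun n => (w n).1) Filter.atTop (nhds p.1) :=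
    tendsto_of_tendsto_of_tendsto_of_le_of_le
      ((continuous_fst.tendsto p).comp hUlim) ((continuous_fst.tendsto p).comp hVlim)
      (fun n => (main n).2.2.2.1.1) (fun n => (main n).2.2.2.2.1.1)
  have hW2 : Filter.Tendsto (fun n => (w n).2) Filter.atTop (nhds p.2) :=
    tendsto_of_tendsto_of_tendsto_of_le_of_le
      ((continuous_snd.tendsto p).comp hVlim) ((continuous_snd.tendsto p).comp hUlim)
      (fun n => (main n).2.2.2.2.1.2) (fun n => (main n).2.2.2.1.2)
  have : Filter.Tendsto w Filter.atTop (nhds p) := by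
    rw [← Prod.mk.eta (p := p), nhds_prod_eq]
    exact hW1.prodMk hW2
  exact this
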